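/- Let W : [-1,1] → [0,∞) satisfy (H1). Then there is NO constant c > 0 such that for all 1-periodic u ∈ W^{1,2}_per((0,1);[−1,1]) and all δ > 0 the inequality c·|u|_{H^{1/2}(0,1)}² ≤ ∫₀¹ ( (1/δ)·W(u) + δ·|u'|² ) dx holds. Concretely, for 0 < δ < 1/8 the 1-periodic piecewise affine function u_δ equal to −1 on (δ, 1/2 − δ/2), equal to +1 on (1/2 + δ/2, 1), interpolating affinely with slope ∓2/δ on (0,δ) and slope +2/δ on (1/2 − δ/2, 1/2 + δ/2), satisfies ∫₀¹ ( (1/δ)·W(u_δ) + δ·|u_δ'|² ) dx ≤ 2·max_{[−1,1]} W + 8, while |u_δ|_{H^{1/2}(0,1)}² → ∞ as δ → 0. -/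

import Mathlib

open MeasureTheory Set Filter

noncomputable section

/-- Elements of `W^{1,2}_per((0,1);[−1,1])`: `1`-periodic functions with values in
`[−1,1]`, encoded via absolute continuity with a periodic derivative `u'` which is
square-integrable on the periodicity cell. -/
structure IsPerW12 (u u' : ℝ → ℝ) : Prop where
  u_per : Function.Periodic u 1
  u'_per : Function.Periodic u' 1
  u_ftc : ∀ x : ℝ, u x = u 0 + ∫ t in (0:ℝ)..x, u' t
  u_mem : ∀ x : ℝ, u x ∈ Icc (-1:ℝ) 1
  u'_l2 : MemLp u' 2 (volume.restrict (Ioo (0:ℝ) 1))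

/-- Fourier coefficient `û_k = ∫₀¹ u(t)·e^{−2πi k t} dt`. -/
def fourierCoef1 (u : ℝ → ℝ) (k : ℤ) : ℂ :=
  ∫ t in Ioo (0:ℝ) 1,
    (u t : ℂ) * Complex.exp (-(2 * Real.pi * Complex.I) * (k : ℂ) * (t : ℂ))

/-- The squared `H^{1/2}(0,1)` seminorm `|u|²_{H^{1/2}} = Σ_{k∈ℤ} |k|·|û_k|²`. -/
def seminormHhalfSq (u : ℝ → ℝ) : ℝ :=
  ∑' k : ℤ, |(k : ℝ)| * ‖fourierCoef1 u k‖ ^ 2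

/-- The `1`-periodic piecewise affine competitor `u_δ`: equal to `−1` on
`(δ, 1/2 − δ/2)`, to `+1` on `(1/2 + δ/2, 1)`, affine with slope `−2/δ` on `(0,δ)`
and slope `+2/δ` on `(1/2 − δ/2, 1/2 + δ/2)`. -/
def uSharp (δ x : ℝ) : ℝ :=
  if Int.fract x < δ then -2 / δ * Int.fract x + 1
  else if Int.fract x < 1 / 2 - δ / 2 then -1
  else if Int.fract x < 1 / 2 + δ / 2 then 2 / δ * Int.fract x - 1 / δ
  else 1

/-- The derivative of `u_δ`. -/
def uSharpDeriv (δ x : ℝ) : ℝ :=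
  if Int.fract x < δ then -2 / δ
  else if Int.fract x < 1 / 2 - δ / 2 then 0
  else if Int.fract x < 1 / 2 + δ / 2 then 2 / δ
  else 0

namespace NoHHalfAux

open Complex intervalIntegral

/-! ### Basic facts about `uSharp` and `uSharpDeriv` -/

lemma uSharp_fract (δ x : ℝ) : uSharp δ x = uSharp δ (Int.fract x) := by
  simp [uSharp, Int.fract_fract]

lemma uSharp_per (δ : ℝ) : Function.Periodic (uSharp δ) 1 := fun x => by
  simp [uSharp, Int.fract_add_one]

lemma uSharpDeriv_per (δ : ℝ) : Function.Periodic (uSharpDeriv δ) 1 := fun x => by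
  simp [uSharpDeriv, Int.fract_add_one]

lemma uSharpDeriv_add_int (δ x : ℝ) (n : ℤ) : uSharpDeriv δ (x + n) = uSharpDeriv δ x := by
  simp [uSharpDeriv, Int.fract_add_intCast]

variable {δ : ℝ}

lemma uSharp_eq1 (hδ : δ ∈ Set.Ioo (0:ℝ) (1/8)) {t : ℝ} (ht : t ∈ Set.Icc 0 δ) :
    uSharp δ t = -2/δ * t + 1 := by
  obtain ⟨hδ0, hδ8⟩ := hδ
  obtain ⟨h0, h1⟩ := ht
  have hf : Int.fract t = t := Int.fract_eq_self.mpr ⟨h0, by linarith⟩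
  rcases lt_or_eq_of_le h1 with h | h
  · simp only [uSharp, hf, if_pos h]
  · subst h
    simp only [uSharp, hf]
    rw [if_neg (lt_irrefl t), if_pos (by linarith)]
    field_simp <;> ring

lemma uSharp_eq2 (hδ : δ ∈ Set.Ioo (0:ℝ) (1/8)) {t : ℝ}
    (ht : t ∈ Set.Icc δ (1/2 - δ/2)) : uSharp δ t = -1 := by
  obtain ⟨hδ0, hδ8⟩ := hδ
  obtain ⟨h0, h1⟩ := ht
  have hf : Int.fract t = t := Int.fract_eq_self.mpr ⟨by linarith, by linarith⟩
  simp only [uSharp, hf]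
  rw [if_neg (by linarith)]
  rcases lt_or_eq_of_le h1 with h | h
  · rw [if_pos h]
  · rw [if_neg (by linarith), if_pos (by linarith), h]
    field_simp <;> ring

lemma uSharp_eq3 (hδ : δ ∈ Set.Ioo (0:ℝ) (1/8)) {t : ℝ}
    (ht : t ∈ Set.Icc (1/2 - δ/2) (1/2 + δ/2)) : uSharp δ t = 2/δ * t - 1/δ := by
  obtain ⟨hδ0, hδ8⟩ := hδ
  obtain ⟨h0, h1⟩ := ht
  have hf : Int.fract t = t := Int.fract_eq_self.mpr ⟨by linarith, by linarith⟩
  simp only [uSharp, hf]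
  rw [if_neg (by linarith), if_neg (by linarith)]
  rcases lt_or_eq_of_le h1 with h | h
  · rw [if_pos h]
  · rw [if_neg (by linarith), h]
    field_simp <;> ring

lemma uSharp_eq4 (hδ : δ ∈ Set.Ioo (0:ℝ) (1/8)) {t : ℝ}
    (ht : t ∈ Set.Icc (1/2 + δ/2) 1) : uSharp δ t = 1 := by
  obtain ⟨hδ0, hδ8⟩ := hδ
  obtain ⟨h0, h1⟩ := ht
  rcases lt_or_eq_of_le h1 with h | h
  · have hf : Int.fract t = t := Int.fract_eq_self.mpr ⟨by linarith, h⟩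
    simp only [uSharp, hf]
    rw [if_neg (by linarith), if_neg (by linarith), if_neg (by linarith)]
  · have hf : Int.fract t = 0 := by rw [h]; exact Int.fract_one
    simp only [uSharp, hf]
    rw [if_pos hδ0]
    ring

lemma uSharpDeriv_eq1 (hδ : δ ∈ Set.Ioo (0:ℝ) (1/8)) {t : ℝ} (ht : t ∈ Set.Ioo 0 δ) :
    uSharpDeriv δ t = -2/δ := by
  obtain ⟨hδ0, hδ8⟩ := hδ
  have hf : Int.fract t = t := Int.fract_eq_self.mpr ⟨ht.1.le, by linarith [ht.2]⟩
  simp only [uSharpDeriv, hf, if_pos ht.2]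

lemma uSharpDeriv_eq2 (hδ : δ ∈ Set.Ioo (0:ℝ) (1/8)) {t : ℝ}
    (ht : t ∈ Set.Ioo δ (1/2 - δ/2)) : uSharpDeriv δ t = 0 := by
  obtain ⟨hδ0, hδ8⟩ := hδ
  obtain ⟨h0, h1⟩ := ht
  have hf : Int.fract t = t := Int.fract_eq_self.mpr ⟨by linarith, by linarith⟩
  simp only [uSharpDeriv, hf]
  rw [if_neg (by linarith), if_pos h1]

lemma uSharpDeriv_eq3 (hδ : δ ∈ Set.Ioo (0:ℝ) (1/8)) {t : ℝ}
    (ht : t ∈ Set.Ioo (1/2 - δ/2) (1/2 + δ/2)) : uSharpDeriv δ t = 2/δ := by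
  obtain ⟨hδ0, hδ8⟩ := hδ
  obtain ⟨h0, h1⟩ := ht
  have hf : Int.fract t = t := Int.fract_eq_self.mpr ⟨by linarith, by linarith⟩
  simp only [uSharpDeriv, hf]
  rw [if_neg (by linarith), if_neg (by linarith), if_pos h1]

lemma uSharpDeriv_eq4 (hδ : δ ∈ Set.Ioo (0:ℝ) (1/8)) {t : ℝ}
    (ht : t ∈ Set.Ioo (1/2 + δ/2) 1) : uSharpDeriv δ t = 0 := by
  obtain ⟨hδ0, hδ8⟩ := hδ
  obtain ⟨h0, h1⟩ := ht
  have hf : Int.fract t = t := Int.fract_eq_self.mpr ⟨by linarith, h1⟩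
  simp only [uSharpDeriv, hf]
  rw [if_neg (by linarith), if_neg (by linarith), if_neg (by linarith)]

lemma uSharpDeriv_abs_le (hδ0 : 0 < δ) (x : ℝ) : |uSharpDeriv δ x| ≤ 2/δ := by
  have h2 : (0:ℝ) ≤ 2/δ := by positivity
  unfold uSharpDeriv
  split_ifs
  · rw [show -2/δ = -(2/δ) by ring, abs_neg, _root_.abs_of_nonneg h2]
  · simpa using h2
  · rw [_root_.abs_of_nonneg h2]
  · simpa using h2

lemma uSharp_mem (hδ : δ ∈ Set.Ioo (0:ℝ) (1/8)) (x : ℝ) :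
    uSharp δ x ∈ Set.Icc (-1:ℝ) 1 := by
  obtain ⟨hδ0, hδ8⟩ := hδ
  have hf0 : 0 ≤ Int.fract x := Int.fract_nonneg x
  have hf1 : Int.fract x < 1 := Int.fract_lt_one x
  set f := Int.fract x with hfdef
  unfold uSharp
  split_ifs with h1 h2 h3
  · have e : -2/δ * f + 1 = (δ - 2*f)/δ := by field_simp <;> ring
    rw [e]
    constructor
    · rw [le_div_iff₀ hδ0]; linarith
    · rw [div_le_iff₀ hδ0]; linarith
  · norm_num
  · have e : 2/δ * f - 1/δ = (2*f - 1)/δ := by field_simp <;> ring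
    rw [e]
    constructor
    · rw [le_div_iff₀ hδ0]
      have : 1/2 - δ/2 ≤ f := not_lt.mp h2
      linarith
    · rw [div_le_iff₀ hδ0]; linarith
  · norm_num

lemma uSharp_measurable (δ : ℝ) : Measurable (uSharp δ) := by
  unfold uSharp
  exact Measurable.ite (measurableSet_lt measurable_fract measurable_const)
    ((measurable_fract.const_mul _).add_const _)
    (Measurable.ite (measurableSet_lt measurable_fract measurable_const) measurable_const
      (Measurable.ite (measurableSet_lt measurable_fract measurable_const)
        ((measurable_fract.const_mul _).sub_const _) measurable_const))

lemma uSharpDeriv_measurable (δ : ℝ) : Measurable (uSharpDeriv δ) := by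
  unfold uSharpDeriv
  exact Measurable.ite (measurableSet_lt measurable_fract measurable_const)
    measurable_const
    (Measurable.ite (measurableSet_lt measurable_fract measurable_const) measurable_const
      (Measurable.ite (measurableSet_lt measurable_fract measurable_const)
        measurable_const measurable_const))

end NoHHalfAux

namespace NoHHalfAux

open Complex intervalIntegral

/-! ### Fourier analysis of `uSharp` -/

def ck (k : ℤ) : ℂ := -(2 * Real.pi * Complex.I) * (k : ℂ)

lemma ck_ne_zero {k : ℤ} (hk : k ≠ 0) : ck k ≠ 0 := by
  apply mul_ne_zero
  · simp [Real.pi_ne_zero, Complex.I_ne_zero]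
  · exact_mod_cast Int.cast_ne_zero.mpr hk

lemma norm_ck (k : ℤ) : ‖ck k‖ = 2 * Real.pi * |(k:ℝ)| := by
  simp [ck, norm_mul, abs_of_pos Real.pi_pos]
  try ring

lemma norm_exp_ck (k : ℤ) (x : ℝ) : ‖Complex.exp (ck k * (x:ℂ))‖ = 1 := by
  have h : (ck k * (x:ℂ)).re = 0 := by
    simp [ck, Complex.mul_re, Complex.mul_im]
  rw [Complex.norm_exp, h, Real.exp_zero]

lemma exp_ck_one (k : ℤ) : Complex.exp (ck k * ((1:ℝ):ℂ)) = 1 := by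
  have h : ck k * ((1:ℝ):ℂ) = ((-k : ℤ) : ℂ) * (2 * Real.pi * Complex.I) := by
    push_cast [ck]; ring
  rw [h, Complex.exp_int_mul_two_pi_mul_I]

lemma exp_ck_half {k : ℤ} (hodd : Odd k) :
    Complex.exp (ck k * (1/2 : ℂ)) = -1 := by
  have h : ck k * (1/2 : ℂ) = ((-k : ℤ) : ℂ) * (Real.pi * Complex.I) := by
    push_cast [ck]; ring
  rw [h, Complex.exp_int_mul, Complex.exp_pi_mul_I]
  exact Odd.neg_one_zpow hodd.neg

lemma prim_hasDeriv (P Q : ℝ) (k : ℤ) (t : ℝ) :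
    HasDerivAt (fun s : ℝ => (ck k * ((P:ℂ) * s + Q) - P) * Complex.exp (ck k * s))
      (ck k ^ 2 * (((P:ℂ) * t + Q) * Complex.exp (ck k * t))) t := by
  have hid : HasDerivAt (fun s : ℝ => (s : ℂ)) 1 t := Complex.ofRealCLM.hasDerivAt
  have h1 : HasDerivAt (fun s : ℝ => ck k * ((P:ℂ) * s + Q) - (P:ℂ))
      (ck k * P) t := by
    have := (((hid.const_mul (P:ℂ)).add_const (Q:ℂ)).const_mul (ck k)).sub_const (P:ℂ)
    simpa [mul_one] using this
  have h2 : HasDerivAt (fun s : ℝ => Complex.exp (ck k * s))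
      (Complex.exp (ck k * t) * ck k) t := by
    have hg : HasDerivAt (fun s : ℝ => ck k * (s:ℂ)) (ck k) t := by
      simpa [mul_one] using hid.const_mul (ck k)
    exact hg.cexp
  have := h1.fun_mul h2
  exact this.congr_deriv (by ring)

lemma fourier_integrand_intervalIntegrable {δ : ℝ} (hδ : δ ∈ Set.Ioo (0:ℝ) (1/8))
    (k : ℤ) (l r : ℝ) :
    IntervalIntegrable (fun t => (uSharp δ t : ℂ) * Complex.exp (ck k * (t:ℂ)))
      MeasureTheory.volume l r := by
  rw [intervalIntegrable_iff]
  apply MeasureTheory.Measure.integrableOn_of_bounded (M := 1)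
    (measure_Ioc_lt_top).ne
  · apply Measurable.aestronglyMeasurable
    exact (Complex.measurable_ofReal.comp (uSharp_measurable δ)).mul
      (Complex.continuous_exp.comp (by continuity)).measurable
  · apply MeasureTheory.ae_of_all
    intro t
    rw [norm_mul, norm_exp_ck, mul_one, Complex.norm_real]
    have := uSharp_mem hδ t
    rw [Set.mem_Icc] at this
    exact abs_le.mpr this

lemma piece_integral {δ : ℝ} (hδ0 : 0 < δ) (P Q : ℝ) (k : ℤ) {l r : ℝ} (hlr : l ≤ r)
    (hagree : ∀ t ∈ Set.Icc l r, uSharp δ t = (P * t + Q) / δ) :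
    (δ:ℂ) * ck k ^ 2 * ∫ t in l..r, (uSharp δ t : ℂ) * Complex.exp (ck k * (t:ℂ))
      = (ck k * ((P:ℂ) * r + Q) - P) * Complex.exp (ck k * (r:ℂ))
        - (ck k * ((P:ℂ) * l + Q) - P) * Complex.exp (ck k * (l:ℂ)) := by
  have hδ' : (δ:ℂ) ≠ 0 := by exact_mod_cast ne_of_gt hδ0
  have hcong : Set.EqOn (fun t : ℝ => (uSharp δ t : ℂ) * Complex.exp (ck k * (t:ℂ)))
      (fun t : ℝ => (((P:ℂ) * t + Q) * Complex.exp (ck k * (t:ℂ))) / δ) (Set.uIcc l r) := by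
    intro t ht
    rw [Set.uIcc_of_le hlr] at ht
    simp only
    rw [hagree t ht]
    push_cast
    ring
  rw [intervalIntegral.integral_congr hcong, intervalIntegral.integral_div]
  have key : ∫ t in l..r, ck k ^ 2 * (((P:ℂ) * t + Q) * Complex.exp (ck k * (t:ℂ)))
      = (ck k * ((P:ℂ) * r + Q) - P) * Complex.exp (ck k * (r:ℂ))
        - (ck k * ((P:ℂ) * l + Q) - P) * Complex.exp (ck k * (l:ℂ)) := by
    apply intervalIntegral.integral_eq_sub_of_hasDerivAt
    · intro t _
      exact prim_hasDeriv P Q k t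
    · apply Continuous.intervalIntegrable
      continuity
  rw [intervalIntegral.integral_const_mul] at key
  rw [← key]
  field_simp

lemma fourier_formula {δ : ℝ} (hδ : δ ∈ Set.Ioo (0:ℝ) (1/8)) (k : ℤ) :
    (δ:ℂ) * ck k ^ 2 * fourierCoef1 (uSharp δ) k
      = 2 * ((Complex.exp (ck k * ((δ:ℝ):ℂ)) - 1)
          - (Complex.exp (ck k * ((1/2 + δ/2 : ℝ):ℂ))
              - Complex.exp (ck k * ((1/2 - δ/2 : ℝ):ℂ)))) := by
  obtain ⟨hδ0, hδ8⟩ := hδ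
  have hδ' : (δ:ℂ) ≠ 0 := by exact_mod_cast ne_of_gt hδ0
  have hii := fourier_integrand_intervalIntegrable ⟨hδ0, hδ8⟩ k
  have h0δ : (0:ℝ) ≤ δ := hδ0.le
  have hδa : δ ≤ 1/2 - δ/2 := by linarith
  have hab : (1/2 - δ/2 : ℝ) ≤ 1/2 + δ/2 := by linarith
  have hb1 : (1/2 + δ/2 : ℝ) ≤ 1 := by linarith
  have hδne : δ ≠ 0 := ne_of_gt hδ0
  have P1 := piece_integral hδ0 (-2) δ k h0δ
    (fun t ht => by rw [uSharp_eq1 ⟨hδ0, hδ8⟩ ht]; field_simp <;> ring)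
  have P2 := piece_integral hδ0 0 (-δ) k hδa
    (fun t ht => by rw [uSharp_eq2 ⟨hδ0, hδ8⟩ ht]; field_simp <;> ring)
  have P3 := piece_integral hδ0 2 (-1) k hab
    (fun t ht => by rw [uSharp_eq3 ⟨hδ0, hδ8⟩ ht]; field_simp <;> ring)
  have P4 := piece_integral hδ0 0 δ k hb1
    (fun t ht => by rw [uSharp_eq4 ⟨hδ0, hδ8⟩ ht]; field_simp <;> ring)
  have h1 : fourierCoef1 (uSharp δ) k
      = ∫ t in (0:ℝ)..(1:ℝ), (uSharp δ t : ℂ) * Complex.exp (ck k * (t:ℂ)) := by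
    rw [intervalIntegral.integral_of_le (by norm_num : (0:ℝ) ≤ 1),
      MeasureTheory.integral_Ioc_eq_integral_Ioo]
    rfl
  rw [h1,
    ← intervalIntegral.integral_add_adjacent_intervals (hii 0 δ) (hii δ 1),
    ← intervalIntegral.integral_add_adjacent_intervals (hii δ (1/2 - δ/2)) (hii (1/2 - δ/2) 1),
    ← intervalIntegral.integral_add_adjacent_intervals (hii (1/2 - δ/2) (1/2 + δ/2))
      (hii (1/2 + δ/2) 1)]
  have e0 : Complex.exp (ck k * ((0:ℝ):ℂ)) = 1 := by norm_num
  have e1 : Complex.exp (ck k * ((1:ℝ):ℂ)) = 1 := exp_ck_one k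
  rw [e0] at P1
  rw [e1] at P4
  rw [mul_add, mul_add, mul_add, P1, P2, P3, P4]
  push_cast
  ring

end NoHHalfAux

namespace NoHHalfAux

open Complex intervalIntegral

lemma fourier_norm_le {δ : ℝ} (hδ : δ ∈ Set.Ioo (0:ℝ) (1/8)) {k : ℤ} (hk : k ≠ 0) :
    ‖fourierCoef1 (uSharp δ) k‖ ≤ 2 / (Real.pi^2 * δ * (k:ℝ)^2) := by
  obtain ⟨hδ0, hδ8⟩ := hδ
  have hπ := Real.pi_pos
  have hkr : ((k:ℝ)) ≠ 0 := Int.cast_ne_zero.mpr hk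
  have hk2 : (0:ℝ) < (k:ℝ)^2 := pow_two_pos_of_ne_zero hkr
  have h := fourier_formula ⟨hδ0, hδ8⟩ k
  set X := ((Complex.exp (ck k * ((δ:ℝ):ℂ)) - 1)
          - (Complex.exp (ck k * ((1/2 + δ/2 : ℝ):ℂ))
              - Complex.exp (ck k * ((1/2 - δ/2 : ℝ):ℂ)))) with hX
  have hXle : ‖X‖ ≤ 4 := by
    rw [hX]
    calc ‖(Complex.exp (ck k * ((δ:ℝ):ℂ)) - 1)
          - (Complex.exp (ck k * ((1/2 + δ/2 : ℝ):ℂ))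
              - Complex.exp (ck k * ((1/2 - δ/2 : ℝ):ℂ)))‖
        ≤ ‖Complex.exp (ck k * ((δ:ℝ):ℂ)) - 1‖
          + ‖Complex.exp (ck k * ((1/2 + δ/2 : ℝ):ℂ))
              - Complex.exp (ck k * ((1/2 - δ/2 : ℝ):ℂ))‖ := norm_sub_le _ _
      _ ≤ (‖Complex.exp (ck k * ((δ:ℝ):ℂ))‖ + ‖(1:ℂ)‖)
          + (‖Complex.exp (ck k * ((1/2 + δ/2 : ℝ):ℂ))‖
              + ‖Complex.exp (ck k * ((1/2 - δ/2 : ℝ):ℂ))‖) :=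
          add_le_add (norm_sub_le _ _) (norm_sub_le _ _)
      _ ≤ 4 := by
          rw [norm_exp_ck, norm_exp_ck, norm_exp_ck]
          norm_num
  have hprod : ‖(δ:ℂ) * ck k ^ 2‖ = 4 * Real.pi^2 * δ * (k:ℝ)^2 := by
    rw [norm_mul, norm_pow, norm_ck, Complex.norm_real, Real.norm_eq_abs,
      abs_of_pos hδ0, mul_pow, mul_pow, _root_.sq_abs]
    ring
  have heq : (4 * Real.pi^2 * δ * (k:ℝ)^2) * ‖fourierCoef1 (uSharp δ) k‖ ≤ 8 := by
    rw [← hprod, ← norm_mul, h, norm_mul]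
    calc ‖(2:ℂ)‖ * ‖X‖ ≤ 2 * 4 := by
          apply mul_le_mul _ hXle (norm_nonneg _) (by norm_num)
          simp
      _ = 8 := by norm_num
  have hpos : (0:ℝ) < 4 * Real.pi^2 * δ * (k:ℝ)^2 := by positivity
  have final : ‖fourierCoef1 (uSharp δ) k‖ ≤ 8 / (4 * Real.pi^2 * δ * (k:ℝ)^2) := by
    rw [le_div_iff₀ hpos, mul_comm]
    exact heq
  calc ‖fourierCoef1 (uSharp δ) k‖ ≤ 8 / (4 * Real.pi^2 * δ * (k:ℝ)^2) := final
    _ = 2 / (Real.pi^2 * δ * (k:ℝ)^2) := by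
        rw [show (4:ℝ) * Real.pi^2 * δ * (k:ℝ)^2 = 4 * (Real.pi^2 * δ * (k:ℝ)^2) by ring,
          show (8:ℝ) = 4 * 2 by norm_num, mul_div_mul_left]
        norm_num

lemma term_le {δ : ℝ} (hδ : δ ∈ Set.Ioo (0:ℝ) (1/8)) {k : ℤ} (hk : k ≠ 0) :
    |(k:ℝ)| * ‖fourierCoef1 (uSharp δ) k‖^2
      ≤ (4 / (Real.pi^4 * δ^2)) * |(k:ℝ)|^(-(3:ℝ)) := by
  obtain ⟨hδ0, hδ8⟩ := hδ
  have hπ := Real.pi_pos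
  have hkr : ((k:ℝ)) ≠ 0 := Int.cast_ne_zero.mpr hk
  have hka : (0:ℝ) < |(k:ℝ)| := abs_pos.mpr hkr
  have h1 := fourier_norm_le ⟨hδ0, hδ8⟩ hk
  have h2 : ‖fourierCoef1 (uSharp δ) k‖^2 ≤ (2 / (Real.pi^2 * δ * (k:ℝ)^2))^2 :=
    pow_le_pow_left₀ (norm_nonneg _) h1 2
  calc |(k:ℝ)| * ‖fourierCoef1 (uSharp δ) k‖^2
      ≤ |(k:ℝ)| * (2 / (Real.pi^2 * δ * (k:ℝ)^2))^2 :=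
        mul_le_mul_of_nonneg_left h2 (abs_nonneg _)
    _ = (4 / (Real.pi^4 * δ^2)) * |(k:ℝ)|^(-(3:ℝ)) := by
        rw [Real.rpow_neg (abs_nonneg _),
          show ((3:ℝ)) = ((3:ℕ):ℝ) by norm_num, Real.rpow_natCast]
        rw [show ((k:ℝ))^2 = |(k:ℝ)|^2 from (_root_.sq_abs _).symm]
        field_simp
        ring

lemma terms_summable {δ : ℝ} (hδ : δ ∈ Set.Ioo (0:ℝ) (1/8)) :
    Summable (fun k : ℤ => |(k:ℝ)| * ‖fourierCoef1 (uSharp δ) k‖^2) := by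
  have hmaj : Summable (fun k : ℤ => (4 / (Real.pi^4 * δ^2)) * |(k:ℝ)|^(-(3:ℝ))) :=
    (Real.summable_abs_int_rpow (by norm_num)).mul_left _
  refine Summable.of_nonneg_of_le (fun k => by positivity) (fun k => ?_) hmaj
  rcases eq_or_ne k 0 with rfl | hk
  · norm_num [Real.zero_rpow]
  · exact term_le hδ hk

lemma term_lower {δ : ℝ} (hδ : δ ∈ Set.Ioo (0:ℝ) (1/8)) {k : ℤ} (hk1 : 1 ≤ k) (hodd : Odd k)
    (hsmall : 3 * Real.pi * (k:ℝ) * δ ≤ 1) :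
    1 / (Real.pi^2 * (k:ℝ)) ≤ |(k:ℝ)| * ‖fourierCoef1 (uSharp δ) k‖^2 := by
  obtain ⟨hδ0, hδ8⟩ := hδ
  have hπ := Real.pi_pos
  have hkr : (1:ℝ) ≤ (k:ℝ) := by exact_mod_cast hk1
  have hk0 : (0:ℝ) < (k:ℝ) := by linarith
  have hkne : k ≠ 0 := by omega
  have hcne : ck k ≠ 0 := ck_ne_zero hkne
  have hδ' : (δ:ℂ) ≠ 0 := by exact_mod_cast ne_of_gt hδ0
  have h := fourier_formula ⟨hδ0, hδ8⟩ k
  have hsplit1 : Complex.exp (ck k * ((1/2 + δ/2 : ℝ):ℂ))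
      = - Complex.exp (ck k * ((δ/2 : ℝ):ℂ)) := by
    rw [show (((1/2 + δ/2 : ℝ)):ℂ) = (1/2 : ℂ) + ((δ/2:ℝ):ℂ) by push_cast; ring,
      mul_add, Complex.exp_add, exp_ck_half hodd]
    ring
  have hsplit2 : Complex.exp (ck k * ((1/2 - δ/2 : ℝ):ℂ))
      = - Complex.exp (-(ck k * ((δ/2 : ℝ):ℂ))) := by
    rw [show (((1/2 - δ/2 : ℝ)):ℂ) = (1/2 : ℂ) + -((δ/2:ℝ):ℂ) by push_cast; ring,
      mul_add, Complex.exp_add, exp_ck_half hodd, mul_neg]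
    ring
  set w := ck k * ((δ/2 : ℝ):ℂ) with hw
  have hz : ck k * ((δ:ℝ):ℂ) = 2 * w := by
    rw [hw, show ((δ:ℝ):ℂ) = 2 * ((δ/2:ℝ):ℂ) by push_cast; ring]
    ring
  rw [hsplit1, hsplit2, hz] at h
  set D := (Complex.exp (2*w) - 1 - 2*w)
    + ((Complex.exp w - 1 - w) - (Complex.exp (-w) - 1 - (-w))) with hD
  have key : (δ:ℂ) * ck k ^ 2 * fourierCoef1 (uSharp δ) k - 4 * ck k * (δ:ℂ) = 2 * D := by
    rw [hD]
    have hwd : (4:ℂ) * ck k * (δ:ℂ) = 8 * w := by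
      rw [hw, show ((δ:ℝ):ℂ) = 2 * ((δ/2:ℝ):ℂ) by push_cast; ring]
      ring
    rw [hwd]
    linear_combination h
  have hfact : (δ:ℂ) * ck k ^ 2 * fourierCoef1 (uSharp δ) k - 4 * ck k * (δ:ℂ)
      = ((δ:ℂ) * ck k ^ 2) * (fourierCoef1 (uSharp δ) k - 4 / ck k) := by
    field_simp
  -- norm of w
  have hnw : ‖w‖ = Real.pi * (k:ℝ) * δ := by
    rw [hw, norm_mul, norm_ck, Complex.norm_real, Real.norm_eq_abs,
      abs_of_pos (by positivity : (0:ℝ) < δ/2), abs_of_pos hk0]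
    ring
  have hwle : ‖w‖ ≤ 1/3 := by
    rw [hnw]
    nlinarith
  have hw1 : ‖w‖ ≤ 1 := by linarith
  have h2w1 : ‖2*w‖ ≤ 1 := by
    rw [norm_mul]
    simp only [Complex.norm_ofNat]
    linarith
  have hnegw1 : ‖-w‖ ≤ 1 := by rw [norm_neg]; exact hw1
  -- bound D
  have hDle : ‖D‖ ≤ 6 * ‖w‖^2 := by
    have b1 : ‖Complex.exp (2*w) - 1 - 2*w‖ ≤ ‖2*w‖^2 := by
      exact Complex.norm_exp_sub_one_sub_id_le (by assumption)
    have b2 : ‖Complex.exp w - 1 - w‖ ≤ ‖w‖^2 := by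
      exact Complex.norm_exp_sub_one_sub_id_le (by assumption)
    have b3 : ‖Complex.exp (-w) - 1 - (-w)‖ ≤ ‖-w‖^2 := by
      exact Complex.norm_exp_sub_one_sub_id_le (by assumption)
    have h2w : ‖2*w‖^2 = 4 * ‖w‖^2 := by
      rw [norm_mul]
      simp only [Complex.norm_ofNat]
      ring
    calc ‖D‖ ≤ ‖Complex.exp (2*w) - 1 - 2*w‖
          + ‖(Complex.exp w - 1 - w) - (Complex.exp (-w) - 1 - (-w))‖ := norm_add_le _ _
      _ ≤ ‖2*w‖^2 + (‖w‖^2 + ‖-w‖^2) :=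
          add_le_add b1 ((norm_sub_le _ _).trans (add_le_add b2 b3))
      _ = 6 * ‖w‖^2 := by rw [h2w, norm_neg]; ring
  -- transfer to the coefficient
  have hnc : ‖ck k‖ = 2 * Real.pi * (k:ℝ) := by
    rw [norm_ck, abs_of_pos hk0]
  have hprodpos : (0:ℝ) < δ * (2 * Real.pi * (k:ℝ))^2 := by positivity
  have hdiff : ‖fourierCoef1 (uSharp δ) k - 4 / ck k‖ ≤ 3 * δ := by
    have hkey : ‖(δ:ℂ) * ck k ^ 2‖ * ‖fourierCoef1 (uSharp δ) k - 4 / ck k‖ = 2 * ‖D‖ := by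
      rw [← norm_mul, ← hfact, key, norm_mul]
      simp only [Complex.norm_ofNat]
    have hnp : ‖(δ:ℂ) * ck k ^ 2‖ = δ * (2 * Real.pi * (k:ℝ))^2 := by
      rw [norm_mul, norm_pow, hnc, Complex.norm_real, Real.norm_eq_abs, abs_of_pos hδ0]
    rw [hnp] at hkey
    have h2D : 2 * ‖D‖ ≤ 12 * (Real.pi * (k:ℝ) * δ)^2 := by
      have := hDle
      rw [hnw] at this
      linarith
    have : (δ * (2 * Real.pi * (k:ℝ))^2) * ‖fourierCoef1 (uSharp δ) k - 4 / ck k‖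
        ≤ 12 * (Real.pi * (k:ℝ) * δ)^2 := by rw [hkey]; exact h2D
    have h3 : 12 * (Real.pi * (k:ℝ) * δ)^2 = (δ * (2 * Real.pi * (k:ℝ))^2) * (3 * δ) := by ring
    rw [h3] at this
    exact le_of_mul_le_mul_left this hprodpos
  have hncoef : ‖(4:ℂ) / ck k‖ = 2 / (Real.pi * (k:ℝ)) := by
    rw [norm_div, hnc]
    simp only [Complex.norm_ofNat]
    rw [show (4:ℝ) = 2*2 by norm_num]
    field_simp <;> ring
  have hlow : 1 / (Real.pi * (k:ℝ)) ≤ ‖fourierCoef1 (uSharp δ) k‖ := by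
    have htri : ‖(4:ℂ) / ck k‖ - ‖fourierCoef1 (uSharp δ) k - 4 / ck k‖
        ≤ ‖fourierCoef1 (uSharp δ) k‖ := by
      have h0 := norm_sub_norm_le ((4:ℂ)/ck k) (4/ck k - fourierCoef1 (uSharp δ) k)
      rw [sub_sub_cancel] at h0
      rw [norm_sub_rev (4/ck k) (fourierCoef1 (uSharp δ) k)] at h0
      exact h0
    have h3δ : 3 * δ ≤ 1 / (Real.pi * (k:ℝ)) := by
      rw [le_div_iff₀ (by positivity)]
      nlinarith
    rw [hncoef] at htri
    have : 2 / (Real.pi * (k:ℝ)) - 3*δ ≤ ‖fourierCoef1 (uSharp δ) k‖ := by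
      linarith [hdiff]
    have h2 : 2 / (Real.pi * (k:ℝ)) - 1 / (Real.pi * (k:ℝ)) = 1 / (Real.pi * (k:ℝ)) := by
      rw [div_sub_div_same]
      norm_num
    linarith
  have hsq : (1 / (Real.pi * (k:ℝ)))^2 ≤ ‖fourierCoef1 (uSharp δ) k‖^2 :=
    pow_le_pow_left₀ (by positivity) hlow 2
  have habs : |(k:ℝ)| = (k:ℝ) := abs_of_pos hk0
  calc 1 / (Real.pi^2 * (k:ℝ)) = (k:ℝ) * (1 / (Real.pi * (k:ℝ)))^2 := by
        field_simp
    _ ≤ (k:ℝ) * ‖fourierCoef1 (uSharp δ) k‖^2 := mul_le_mul_of_nonneg_left hsq hk0.le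
    _ = |(k:ℝ)| * ‖fourierCoef1 (uSharp δ) k‖^2 := by rw [habs]

lemma seminorm_ge {δ : ℝ} (hδ : δ ∈ Set.Ioo (0:ℝ) (1/8)) (N : ℕ)
    (hN : ∀ j < N, 3 * Real.pi * (2*(j:ℝ)+1) * δ ≤ 1) :
    ∑ j ∈ Finset.range N, 1 / (Real.pi^2 * (2*(j:ℝ)+1)) ≤ seminormHhalfSq (uSharp δ) := by
  have hsum := terms_summable hδ
  set s : Finset ℤ := (Finset.range N).image (fun j : ℕ => 2*(j:ℤ)+1) with hs
  have hinj : Set.InjOn (fun j : ℕ => 2*(j:ℤ)+1) (Finset.range N) := by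
    intro a _ b _ hab
    dsimp only at hab
    omega
  have h1 : ∑ i ∈ s, |(i:ℝ)| * ‖fourierCoef1 (uSharp δ) i‖^2
      ≤ seminormHhalfSq (uSharp δ) :=
    Summable.sum_le_tsum s (fun i _ => by positivity) hsum
  rw [hs, Finset.sum_image hinj] at h1
  refine le_trans (Finset.sum_le_sum fun j hj => ?_) h1
  have hjN : j < N := Finset.mem_range.mp hj
  have hcast : ((2*(j:ℤ)+1 : ℤ) : ℝ) = 2*(j:ℝ)+1 := by push_cast; ring
  have hterm := term_lower hδ (k := 2*(j:ℤ)+1) (by omega) ⟨(j:ℤ), by ring⟩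
    (by rw [hcast]; exact hN j hjN)
  rw [hcast] at hterm ⊢
  exact hterm

lemma harmonic_odd_tendsto :
    Filter.Tendsto (fun N : ℕ => ∑ j ∈ Finset.range N, 1 / (Real.pi^2 * (2*(j:ℝ)+1)))
      Filter.atTop Filter.atTop := by
  have hπ := Real.pi_pos
  have hbase := Real.tendsto_sum_range_one_div_nat_succ_atTop
  have hconst : Filter.Tendsto
      (fun N : ℕ => (1/(2*Real.pi^2)) * ∑ j ∈ Finset.range N, 1 / ((j:ℝ)+1))
      Filter.atTop Filter.atTop :=
    hbase.const_mul_atTop (by positivity)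
  apply Filter.tendsto_atTop_mono _ hconst
  intro N
  rw [Finset.mul_sum]
  apply Finset.sum_le_sum
  intro j _
  rw [div_mul_div_comm, one_mul, div_le_div_iff₀ (by positivity) (by positivity), one_mul, one_mul]
  have hj0 : (0:ℝ) ≤ (j:ℝ) := Nat.cast_nonneg j
  nlinarith [sq_nonneg Real.pi]

lemma seminorm_tendsto :
    Filter.Tendsto (fun δ : ℝ => seminormHhalfSq (uSharp δ))
      (nhdsWithin 0 (Set.Ioo (0:ℝ) (1/8))) Filter.atTop := by
  have hπ := Real.pi_pos
  rw [Filter.tendsto_atTop]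
  intro C
  obtain ⟨N, hNsum⟩ : ∃ N : ℕ, C ≤ ∑ j ∈ Finset.range N, 1 / (Real.pi^2 * (2*(j:ℝ)+1)) :=
    (harmonic_odd_tendsto.eventually_ge_atTop C).exists
  have hεpos : (0:ℝ) < 1 / (3 * Real.pi * (2*(N:ℝ)+1)) := by positivity
  have hev : ∀ᶠ δ : ℝ in nhdsWithin 0 (Set.Ioo (0:ℝ) (1/8)),
      δ < 1 / (3 * Real.pi * (2*(N:ℝ)+1)) :=
    Filter.Eventually.filter_mono nhdsWithin_le_nhds (gt_mem_nhds hεpos)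
  filter_upwards [hev, self_mem_nhdsWithin] with δ hlt hmem
  refine le_trans hNsum (seminorm_ge hmem N fun j hj => ?_)
  obtain ⟨hδ0, _⟩ := hmem
  have hj1 : (2*(j:ℝ)+1) ≤ 2*(N:ℝ)+1 := by
    have : (j:ℝ) ≤ (N:ℝ) := by exact_mod_cast (Nat.le_of_lt hj)
    linarith
  have hd : δ * (3 * Real.pi * (2*(N:ℝ)+1)) < 1 := by
    rw [← lt_div_iff₀ (by positivity)]
    exact hlt
  nlinarith [Real.pi_pos]

end NoHHalfAux

namespace NoHHalfAux

open intervalIntegral MeasureTheory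

lemma deriv_intervalIntegrable {δ : ℝ} (hδ0 : 0 < δ) (l r : ℝ) :
    IntervalIntegrable (uSharpDeriv δ) volume l r := by
  rw [intervalIntegrable_iff]
  apply Measure.integrableOn_of_bounded (M := 2/δ) (measure_Ioc_lt_top).ne
    ((uSharpDeriv_measurable δ).aestronglyMeasurable)
  apply ae_of_all
  intro t
  rw [Real.norm_eq_abs]
  exact uSharpDeriv_abs_le hδ0 t

lemma deriv_piece_integral {δ : ℝ} {l r C : ℝ} (hlr : l ≤ r)
    (h : ∀ t ∈ Set.Ioo l r, uSharpDeriv δ t = C) :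
    ∫ t in l..r, uSharpDeriv δ t = C * (r - l) := by
  rw [intervalIntegral.integral_of_le hlr, MeasureTheory.integral_Ioc_eq_integral_Ioo,
    setIntegral_congr_fun measurableSet_Ioo (fun t ht => h t ht), setIntegral_const,
    Real.volume_real_Ioo_of_le hlr, smul_eq_mul, mul_comm]

lemma uSharp_zero {δ : ℝ} (hδ0 : 0 < δ) : uSharp δ 0 = 1 := by
  simp only [uSharp, Int.fract_zero, if_pos hδ0]
  ring

lemma uSharp_ftc {δ : ℝ} (hδ : δ ∈ Set.Ioo (0:ℝ) (1/8)) (x : ℝ) :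
    uSharp δ x = uSharp δ 0 + ∫ t in (0:ℝ)..x, uSharpDeriv δ t := by
  obtain ⟨hδ0, hδ8⟩ := hδ
  have hInt := deriv_intervalIntegrable hδ0
  have hδa : δ ≤ 1/2 - δ/2 := by linarith
  have hab : (1/2 - δ/2 : ℝ) ≤ 1/2 + δ/2 := by linarith
  have hb1 : (1/2 + δ/2 : ℝ) ≤ 1 := by linarith
  have hδne : δ ≠ 0 := ne_of_gt hδ0
  -- value of ∫ 0..x for x in [0,1]
  have key0 : ∀ x ∈ Set.Icc (0:ℝ) 1,
      uSharp δ x = 1 + ∫ t in (0:ℝ)..x, uSharpDeriv δ t := by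
    intro x hx
    obtain ⟨hx0, hx1⟩ := hx
    rcases le_or_gt x δ with h1 | h1
    · rw [uSharp_eq1 ⟨hδ0, hδ8⟩ ⟨hx0, h1⟩,
        deriv_piece_integral hx0 (fun t ht =>
          uSharpDeriv_eq1 ⟨hδ0, hδ8⟩ ⟨ht.1, lt_of_lt_of_le ht.2 h1⟩)]
      ring
    rcases le_or_gt x (1/2 - δ/2) with h2 | h2
    · rw [uSharp_eq2 ⟨hδ0, hδ8⟩ ⟨h1.le, h2⟩,
        ← intervalIntegral.integral_add_adjacent_intervals (hInt 0 δ) (hInt δ x),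
        deriv_piece_integral hδ0.le (fun t ht => uSharpDeriv_eq1 ⟨hδ0, hδ8⟩ ht),
        deriv_piece_integral h1.le (fun t ht =>
          uSharpDeriv_eq2 ⟨hδ0, hδ8⟩ ⟨ht.1, lt_of_lt_of_le ht.2 h2⟩)]
      field_simp <;> ring
    rcases le_or_gt x (1/2 + δ/2) with h3 | h3
    · rw [uSharp_eq3 ⟨hδ0, hδ8⟩ ⟨h2.le, h3⟩,
        ← intervalIntegral.integral_add_adjacent_intervals (hInt 0 δ) (hInt δ x),
        ← intervalIntegral.integral_add_adjacent_intervals (hInt δ (1/2 - δ/2))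
          (hInt (1/2 - δ/2) x),
        deriv_piece_integral hδ0.le (fun t ht => uSharpDeriv_eq1 ⟨hδ0, hδ8⟩ ht),
        deriv_piece_integral hδa (fun t ht => uSharpDeriv_eq2 ⟨hδ0, hδ8⟩ ht),
        deriv_piece_integral h2.le (fun t ht =>
          uSharpDeriv_eq3 ⟨hδ0, hδ8⟩ ⟨ht.1, lt_of_lt_of_le ht.2 h3⟩)]
      field_simp
      ring
    · rw [uSharp_eq4 ⟨hδ0, hδ8⟩ ⟨h3.le, hx1⟩,
        ← intervalIntegral.integral_add_adjacent_intervals (hInt 0 δ) (hInt δ x),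
        ← intervalIntegral.integral_add_adjacent_intervals (hInt δ (1/2 - δ/2))
          (hInt (1/2 - δ/2) x),
        ← intervalIntegral.integral_add_adjacent_intervals (hInt (1/2 - δ/2) (1/2 + δ/2))
          (hInt (1/2 + δ/2) x),
        deriv_piece_integral hδ0.le (fun t ht => uSharpDeriv_eq1 ⟨hδ0, hδ8⟩ ht),
        deriv_piece_integral hδa (fun t ht => uSharpDeriv_eq2 ⟨hδ0, hδ8⟩ ht),
        deriv_piece_integral hab (fun t ht => uSharpDeriv_eq3 ⟨hδ0, hδ8⟩ ht),
        deriv_piece_integral h3.le (fun t ht =>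
          uSharpDeriv_eq4 ⟨hδ0, hδ8⟩ ⟨ht.1, lt_of_lt_of_le ht.2 hx1⟩)]
      field_simp
      ring
  -- integral over a full period is zero
  have h01 : ∫ t in (0:ℝ)..1, uSharpDeriv δ t = 0 := by
    rw [← intervalIntegral.integral_add_adjacent_intervals (hInt 0 δ) (hInt δ 1),
      ← intervalIntegral.integral_add_adjacent_intervals (hInt δ (1/2 - δ/2))
        (hInt (1/2 - δ/2) 1),
      ← intervalIntegral.integral_add_adjacent_intervals (hInt (1/2 - δ/2) (1/2 + δ/2))
        (hInt (1/2 + δ/2) 1),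
      deriv_piece_integral hδ0.le (fun t ht => uSharpDeriv_eq1 ⟨hδ0, hδ8⟩ ht),
      deriv_piece_integral hδa (fun t ht => uSharpDeriv_eq2 ⟨hδ0, hδ8⟩ ht),
      deriv_piece_integral hab (fun t ht => uSharpDeriv_eq3 ⟨hδ0, hδ8⟩ ht),
      deriv_piece_integral hb1 (fun t ht => uSharpDeriv_eq4 ⟨hδ0, hδ8⟩ ht)]
    field_simp
    ring
  rw [uSharp_zero hδ0]
  have hfr : uSharp δ x = uSharp δ (Int.fract x) := uSharp_fract δ x
  have hmem : Int.fract x ∈ Set.Icc (0:ℝ) 1 :=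
    ⟨Int.fract_nonneg x, (Int.fract_lt_one x).le⟩
  have hsplit : ∫ t in (0:ℝ)..x, uSharpDeriv δ t
      = (∫ t in (0:ℝ)..((⌊x⌋:ℤ):ℝ), uSharpDeriv δ t)
        + ∫ t in ((⌊x⌋:ℤ):ℝ)..x, uSharpDeriv δ t :=
    (intervalIntegral.integral_add_adjacent_intervals (hInt _ _) (hInt _ _)).symm
  have hper1 : ∫ t in (0:ℝ)..((⌊x⌋:ℤ):ℝ), uSharpDeriv δ t = 0 := by
    have h := (uSharpDeriv_per δ).intervalIntegral_add_zsmul_eq ⌊x⌋ 0 hInt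
    simp only [zero_add, zsmul_eq_mul, mul_one, smul_eq_mul] at h
    rw [h, h01, mul_zero]
  have hper2 : ∫ t in ((⌊x⌋:ℤ):ℝ)..x, uSharpDeriv δ t
      = ∫ t in (0:ℝ)..(Int.fract x), uSharpDeriv δ t := by
    have hcomp := intervalIntegral.integral_comp_add_right (a := (0:ℝ)) (b := Int.fract x)
      (f := uSharpDeriv δ) ((⌊x⌋:ℤ):ℝ)
    rw [zero_add, Int.fract_add_floor] at hcomp
    rw [← hcomp]
    apply intervalIntegral.integral_congr
    intro t _
    exact uSharpDeriv_add_int δ t ⌊x⌋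
  rw [hfr, key0 _ hmem, hsplit, hper1, hper2, zero_add]

lemma isPerW12 {δ : ℝ} (hδ : δ ∈ Set.Ioo (0:ℝ) (1/8)) :
    IsPerW12 (uSharp δ) (uSharpDeriv δ) := by
  haveI : IsFiniteMeasure (volume.restrict (Set.Ioo (0:ℝ) 1)) := by
    constructor
    rw [Measure.restrict_apply_univ]
    exact measure_Ioo_lt_top
  refine ⟨uSharp_per δ, uSharpDeriv_per δ, uSharp_ftc hδ, uSharp_mem hδ, ?_⟩
  apply MemLp.of_bound ((uSharpDeriv_measurable δ).aestronglyMeasurable) (2/δ)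
  apply ae_of_all
  intro x
  rw [Real.norm_eq_abs]
  exact uSharpDeriv_abs_le hδ.1 x

lemma energy_le {δ : ℝ} (hδ : δ ∈ Set.Ioo (0:ℝ) (1/8)) (W : ℝ → ℝ)
    (hW_cont : ContinuousOn W (Set.Icc (-1:ℝ) 1))
    (hW_nonneg : ∀ x ∈ Set.Icc (-1:ℝ) 1, 0 ≤ W x)
    (hW1 : W 1 = 0) (hWm1 : W (-1) = 0) :
    (∫ x in Set.Ioo (0:ℝ) 1, (1/δ * W (uSharp δ x) + δ * uSharpDeriv δ x ^ 2))
      ≤ 2 * sSup (W '' Set.Icc (-1:ℝ) 1) + 8 := by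
  obtain ⟨hδ0, hδ8⟩ := hδ
  have hδa : δ ≤ 1/2 - δ/2 := by linarith
  have hab : (1/2 - δ/2 : ℝ) ≤ 1/2 + δ/2 := by linarith
  have hb1 : (1/2 + δ/2 : ℝ) ≤ 1 := by linarith
  have hδne : δ ≠ 0 := ne_of_gt hδ0
  set M := sSup (W '' Set.Icc (-1:ℝ) 1) with hM
  have hbdd : BddAbove (W '' Set.Icc (-1:ℝ) 1) :=
    (isCompact_Icc.image_of_continuousOn hW_cont).bddAbove
  have hMle : ∀ y ∈ Set.Icc (-1:ℝ) 1, W y ≤ M :=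
    fun y hy => le_csSup hbdd ⟨y, hy, rfl⟩
  have hM0 : 0 ≤ M := hW1 ▸ hMle 1 ⟨by norm_num, le_refl 1⟩
  -- measurable version of W via projection
  set WP : ℝ → ℝ := fun y => W (Set.projIcc (-1:ℝ) 1 (by norm_num) y) with hWP
  have hWPcont : Continuous WP := hW_cont.restrict.comp continuous_projIcc
  have hWPeq : ∀ y ∈ Set.Icc (-1:ℝ) 1, WP y = W y := by
    intro y hy
    rw [hWP]
    simp only
    rw [Set.projIcc_of_mem _ hy]
  set g : ℝ → ℝ := fun x => 1/δ * WP (uSharp δ x) + δ * uSharpDeriv δ x ^ 2 with hg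
  have hfun : (fun x => 1/δ * W (uSharp δ x) + δ * uSharpDeriv δ x ^ 2) = g := by
    funext x
    rw [hg]
    simp only
    rw [hWPeq _ (uSharp_mem ⟨hδ0, hδ8⟩ x)]
  have hgm : Measurable g :=
    ((hWPcont.measurable.comp (uSharp_measurable δ)).const_mul _).add
      (((uSharpDeriv_measurable δ).pow_const 2).const_mul _)
  have hg0 : ∀ x, 0 ≤ g x := by
    intro x
    rw [hg]
    simp only
    have h1 : 0 ≤ WP (uSharp δ x) := by
      rw [hWPeq _ (uSharp_mem ⟨hδ0, hδ8⟩ x)]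
      exact hW_nonneg _ (uSharp_mem ⟨hδ0, hδ8⟩ x)
    positivity
  have hgb : ∀ x, g x ≤ M/δ + 4/δ := by
    intro x
    rw [hg]
    simp only
    have h1 : WP (uSharp δ x) ≤ M := by
      rw [hWPeq _ (uSharp_mem ⟨hδ0, hδ8⟩ x)]
      exact hMle _ (uSharp_mem ⟨hδ0, hδ8⟩ x)
    have h2 : uSharpDeriv δ x ^ 2 ≤ (2/δ)^2 := by
      rw [← _root_.sq_abs (uSharpDeriv δ x)]
      apply pow_le_pow_left₀ (abs_nonneg _) (uSharpDeriv_abs_le hδ0 x)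
    have h3 : δ * uSharpDeriv δ x ^ 2 ≤ δ * (2/δ)^2 :=
      mul_le_mul_of_nonneg_left h2 hδ0.le
    have h4 : δ * (2/δ)^2 = 4/δ := by field_simp; ring
    have h5 : 1/δ * WP (uSharp δ x) ≤ 1/δ * M :=
      mul_le_mul_of_nonneg_left h1 (by positivity)
    have h6 : 1/δ * M = M/δ := by ring
    linarith
  have hIg : ∀ l r : ℝ, IntervalIntegrable g volume l r := by
    intro l r
    rw [intervalIntegrable_iff]
    apply Measure.integrableOn_of_bounded (M := M/δ + 4/δ) (measure_Ioc_lt_top).ne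
      hgm.aestronglyMeasurable
    apply ae_of_all
    intro t
    rw [Real.norm_eq_abs, abs_of_nonneg (hg0 t)]
    exact hgb t
  -- bound on a transition piece
  have piece_bound : ∀ l r : ℝ, l ≤ r → (∫ t in l..r, g t) ≤ (M/δ + 4/δ) * (r - l) := by
    intro l r hlr
    have hmeas : volume.real (Set.Ioc l r) = r - l := by
      rw [Real.volume_real_Ioc_of_le hlr]
    have := norm_setIntegral_le_of_norm_le_const (μ := volume) (s := Set.Ioc l r)
      (C := M/δ + 4/δ) measure_Ioc_lt_top
      (fun x _ => by rw [Real.norm_eq_abs, abs_of_nonneg (hg0 x)]; exact hgb x)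
    rw [hmeas] at this
    rw [intervalIntegral.integral_of_le hlr]
    calc ∫ t in Set.Ioc l r, g t ≤ ‖∫ t in Set.Ioc l r, g t‖ := le_abs_self _
      _ ≤ (M/δ + 4/δ) * (r - l) := this
  -- vanishing on the plateaus
  have plateau2 : ∫ t in δ..(1/2 - δ/2), g t = 0 := by
    rw [intervalIntegral.integral_of_le hδa, MeasureTheory.integral_Ioc_eq_integral_Ioo,
      setIntegral_congr_fun measurableSet_Ioo (g := fun _ => (0:ℝ))]
    · simp
    · intro t ht
      rw [hg]
      simp only
      rw [uSharp_eq2 ⟨hδ0, hδ8⟩ ⟨ht.1.le, ht.2.le⟩, uSharpDeriv_eq2 ⟨hδ0, hδ8⟩ ht,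
        hWPeq _ (by norm_num), hWm1]
      ring
  have plateau4 : ∫ t in (1/2 + δ/2)..1, g t = 0 := by
    rw [intervalIntegral.integral_of_le hb1, MeasureTheory.integral_Ioc_eq_integral_Ioo,
      setIntegral_congr_fun measurableSet_Ioo (g := fun _ => (0:ℝ))]
    · simp
    · intro t ht
      rw [hg]
      simp only
      rw [uSharp_eq4 ⟨hδ0, hδ8⟩ ⟨ht.1.le, ht.2.le⟩, uSharpDeriv_eq4 ⟨hδ0, hδ8⟩ ht,
        hWPeq _ (by norm_num), hW1]
      ring
  rw [hfun]
  have hioo : ∫ x in Set.Ioo (0:ℝ) 1, g x = ∫ t in (0:ℝ)..1, g t := by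
    rw [intervalIntegral.integral_of_le (by norm_num : (0:ℝ) ≤ 1),
      MeasureTheory.integral_Ioc_eq_integral_Ioo]
  rw [hioo,
    ← intervalIntegral.integral_add_adjacent_intervals (hIg 0 δ) (hIg δ 1),
    ← intervalIntegral.integral_add_adjacent_intervals (hIg δ (1/2 - δ/2)) (hIg (1/2 - δ/2) 1),
    ← intervalIntegral.integral_add_adjacent_intervals (hIg (1/2 - δ/2) (1/2 + δ/2))
      (hIg (1/2 + δ/2) 1),
    plateau2, plateau4]
  have b1 := piece_bound 0 δ hδ0.le
  have b3 := piece_bound (1/2 - δ/2) (1/2 + δ/2) hab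
  have e1 : (M/δ + 4/δ) * (δ - 0) = M + 4 := by field_simp; ring
  have e3 : (M/δ + 4/δ) * ((1/2 + δ/2) - (1/2 - δ/2)) = M + 4 := by
    rw [show (1/2 + δ/2 : ℝ) - (1/2 - δ/2) = δ by ring]
    field_simp
  rw [e1] at b1
  rw [e3] at b3
  linarith

end NoHHalfAux

/-- if `W` satisfies (H1), there is NO constant `c > 0` such that
`c·|u|²_{H^{1/2}} ≤ ∫₀¹ ((1/δ)W(u) + δ|u'|²)` holds for all periodic
`u ∈ W^{1,2}_per((0,1);[−1,1])` and all `δ > 0`.  Concretely, for `0 < δ < 1/8`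
the function `u_δ` satisfies `∫₀¹ ((1/δ)W(u_δ) + δ|u_δ'|²) ≤ 2·max_{[−1,1]}W + 8`,
while `|u_δ|²_{H^{1/2}} → ∞` as `δ → 0`. -/
theorem no_H_half_interpolation (W : ℝ → ℝ)
    (hW_cont : ContinuousOn W (Icc (-1:ℝ) 1))
    (hW_nonneg : ∀ x ∈ Icc (-1:ℝ) 1, 0 ≤ W x)
    (hW_zero : ∀ x ∈ Icc (-1:ℝ) 1, (W x = 0 ↔ x = -1 ∨ x = 1)) :
    (¬ ∃ c : ℝ, 0 < c ∧ ∀ u u' : ℝ → ℝ, IsPerW12 u u' → ∀ δ : ℝ, 0 < δ →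
        c * seminormHhalfSq u ≤
          ∫ x in Ioo (0:ℝ) 1, (1 / δ * W (u x) + δ * u' x ^ 2)) ∧
    (∀ δ : ℝ, δ ∈ Ioo (0:ℝ) (1 / 8) →
        (∫ x in Ioo (0:ℝ) 1, (1 / δ * W (uSharp δ x) + δ * uSharpDeriv δ x ^ 2)) ≤
          2 * sSup (W '' Icc (-1:ℝ) 1) + 8) ∧
    Tendsto (fun δ : ℝ => seminormHhalfSq (uSharp δ))
      (nhdsWithin 0 (Ioo (0:ℝ) (1 / 8))) atTop := by
  have hW1 : W 1 = 0 := (hW_zero 1 (by norm_num)).mpr (Or.inr rfl)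
  have hWm1 : W (-1) = 0 := (hW_zero (-1) (by norm_num)).mpr (Or.inl rfl)
  have henergy : ∀ δ : ℝ, δ ∈ Ioo (0:ℝ) (1/8) →
      (∫ x in Ioo (0:ℝ) 1, (1 / δ * W (uSharp δ x) + δ * uSharpDeriv δ x ^ 2)) ≤
        2 * sSup (W '' Icc (-1:ℝ) 1) + 8 :=
    fun δ hδ => NoHHalfAux.energy_le hδ W hW_cont hW_nonneg hW1 hWm1
  refine ⟨?_, henergy, NoHHalfAux.seminorm_tendsto⟩
  rintro ⟨c, hc, H⟩
  set M := sSup (W '' Icc (-1:ℝ) 1) with hM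
  haveI hne : (nhdsWithin (0:ℝ) (Ioo (0:ℝ) (1/8))).NeBot := by
    apply mem_closure_iff_nhdsWithin_neBot.mp
    rw [closure_Ioo (by norm_num : (0:ℝ) ≠ 1/8)]
    exact ⟨le_refl 0, by norm_num⟩
  have hev : ∀ᶠ δ in nhdsWithin (0:ℝ) (Ioo (0:ℝ) (1/8)),
      (2*M+8)/c + 1 ≤ seminormHhalfSq (uSharp δ) :=
    NoHHalfAux.seminorm_tendsto.eventually_ge_atTop _
  obtain ⟨δ, hδge, hδmem⟩ := (hev.and self_mem_nhdsWithin).exists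
  have hineq := H (uSharp δ) (uSharpDeriv δ) (NoHHalfAux.isPerW12 hδmem) δ hδmem.1
  have hen := henergy δ hδmem
  have h1 : c * ((2*M+8)/c + 1) ≤ c * seminormHhalfSq (uSharp δ) :=
    mul_le_mul_of_nonneg_left hδge hc.le
  have h2 : c * ((2*M+8)/c + 1) = 2*M+8 + c := by field_simp
  linarith
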